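/- If G and H are connected graphs, then σ(G □ H) ≤ σ(G) + σ(H), where □ denotes the Cartesian product. -/

import Mathlib

/-! Surrounding Cops and Robbers.

Game state: positions of the `k` cops (`Fin k → V`) and of the robber (`V`),
with the cops to move.  On the cops' turn each cop may stay or move along an
edge; the cops win immediately if every neighbour of the robber's vertex is
occupied by a cop.  Otherwise the robber must stay or move along an edge,
ending on a vertex not occupied by any cop (in particular, if a cop lands on
the robber's vertex he is compelled to move off it).  `CopsWin` is the least
fixed point expressing that the cops can force a win in finitely many moves. -/

namespace SurroundGame

variable {V : Type*} (G : SimpleGraph V)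

/-- One legal simultaneous move of the cops: each cop stays or moves along an edge. -/
def CopsMove {k : ℕ} (c c' : Fin k → V) : Prop :=
  ∀ i, c' i = c i ∨ G.Adj (c i) (c' i)

/-- One legal move of the robber (ignoring cop positions): stay or move along an edge. -/
def RobberMove (r r' : V) : Prop :=
  r' = r ∨ G.Adj r r'

/-- The robber at `r` is surrounded: every neighbour of `r` is occupied by a cop. -/
def Surrounded {k : ℕ} (c : Fin k → V) (r : V) : Prop :=
  ∀ w, G.Adj r w → ∃ i, c i = w

/-- With cops at `c`, robber at `r` and the cops to move, the cops can force a win: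
they make a legal move after which either the robber is surrounded, or every legal
robber response (to a vertex free of cops) leads to a position where they again win. -/
inductive CopsWin : {k : ℕ} → (Fin k → V) → V → Prop
  | surround {k : ℕ} (c : Fin k → V) (r : V) (c' : Fin k → V)
      (hmove : CopsMove G c c')
      (hsur : Surrounded G c' r) :
      CopsWin c r
  | step {k : ℕ} (c : Fin k → V) (r : V) (c' : Fin k → V)
      (hmove : CopsMove G c c')
      (hnext : ∀ r', RobberMove G r r' → (∀ i, c' i ≠ r') → CopsWin c' r') :
      CopsWin c r

/-- `k` cops have a winning strategy on `G`: they have an initial placement such that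
whatever starting vertex (unoccupied by cops) the robber picks, the cops win. -/
def CopsWinWith (k : ℕ) : Prop :=
  ∃ c : Fin k → V, ∀ r : V, (∀ i, c i ≠ r) → CopsWin G c r

/-- The surrounding cop number: the least number of cops with a winning strategy. -/
noncomputable def surroundNumber : ℕ :=
  sInf {k | CopsWinWith G k}

end SurroundGame


open SurroundGame

namespace SurroundProof

variable {α : Type*} {β : Type*}

/-- The cops can force a win within `n` of their moves. -/
def WinIn (G : SimpleGraph α) {k : ℕ} : ℕ → (Fin k → α) → α → Prop
  | 0, _, _ => False
  | n+1, c, r => ∃ c', CopsMove G c c' ∧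
      (Surrounded G c' r ∨ ∀ r', RobberMove G r r' → (∀ i, c' i ≠ r') → WinIn G n c' r')

lemma winIn_mono {G : SimpleGraph α} {k : ℕ} :
    ∀ (m n : ℕ) (c : Fin k → α) (r : α), m ≤ n → WinIn G m c r → WinIn G n c r := by
  intro m
  induction m with
  | zero => intro n c r _ h; exact h.elim
  | succ m ih =>
    intro n c r hmn h
    obtain ⟨n', rfl⟩ : ∃ n', n = n' + 1 := ⟨n - 1, by omega⟩
    obtain ⟨c', h1, h2⟩ := h
    exact ⟨c', h1, h2.imp id (fun hh r' hr hf => ih n' c' r' (by omega) (hh r' hr hf))⟩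

lemma copsWin_exists_winIn {G : SimpleGraph α} [Fintype α] {k : ℕ} {c : Fin k → α} {r : α}
    (h : CopsWin G c r) : ∃ n, WinIn G n c r := by
  induction h with
  | surround c r c' hmove hsur => exact ⟨1, c', hmove, Or.inl hsur⟩
  | step c r c' hmove hnext ih =>
    have h' : ∀ r' : α, ∃ n, (RobberMove G r r' → (∀ i, c' i ≠ r') → WinIn G n c' r') := by
      intro r'
      by_cases h1 : RobberMove G r r'
      · by_cases h2 : ∀ i, c' i ≠ r'
        · obtain ⟨n, hn⟩ := ih r' h1 h2; exact ⟨n, fun _ _ => hn⟩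
        · exact ⟨0, fun _ hh => absurd hh h2⟩
      · exact ⟨0, fun hh => absurd hh h1⟩
    choose f hf using h'
    exact ⟨Finset.univ.sup f + 1, c', hmove, Or.inr fun r' h1 h2 =>
      winIn_mono _ _ _ _ (Finset.le_sup (Finset.mem_univ r')) (hf r' h1 h2)⟩

lemma exists_chase {G : SimpleGraph α} (hG : G.Connected) {x a : α} (h : x ≠ a) :
    ∃ x', G.Adj x x' ∧ G.dist x' a < G.dist x a := by
  obtain ⟨p, hp⟩ := hG.exists_walk_length_eq_dist x a
  cases p with
  | nil => exact absurd rfl h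
  | cons hadj q =>
    refine ⟨_, hadj, ?_⟩
    have h2 := SimpleGraph.dist_le q
    simp only [SimpleGraph.Walk.length_cons] at hp
    omega

lemma exists_winIn_of_copsWinWith {G : SimpleGraph α} [Fintype α] (hG : G.Connected) {k : ℕ}
    (hk : CopsWinWith G k) (c : Fin k → α) (r : α) : ∃ n, WinIn G n c r := by
  classical
  obtain ⟨c0, h0⟩ := hk
  have h' : ∀ r : α, ∃ n, ((∀ i, c0 i ≠ r) → WinIn G n c0 r) := by
    intro r
    by_cases hr : ∀ i, c0 i ≠ r
    · obtain ⟨n, hn⟩ := copsWin_exists_winIn (h0 r hr); exact ⟨n, fun _ => hn⟩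
    · exact ⟨0, fun hh => absurd hh hr⟩
  choose f hf using h'
  set N := Finset.univ.sup f with hN
  have hA : ∀ r : α, WinIn G (N+1) c0 r := fun r =>
    ⟨c0, fun i => Or.inl rfl, Or.inr fun r' _ h2 =>
      winIn_mono _ _ _ _ (Finset.le_sup (Finset.mem_univ r')) (hf r' h2)⟩
  suffices hsuff : ∀ d (c : Fin k → α), (∑ i, G.dist (c i) (c0 i)) = d → ∀ r,
      WinIn G (N + 1 + d) c r by
    exact ⟨N + 1 + ∑ i, G.dist (c i) (c0 i), hsuff _ c rfl r⟩
  intro d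
  induction d using Nat.strong_induction_on with
  | _ d ih =>
    intro c hc r
    rcases Nat.eq_zero_or_pos d with rfl | hd
    · have hcc : c = c0 := by
        funext i
        have hz : G.dist (c i) (c0 i) = 0 := by
          have := (Finset.sum_eq_zero_iff.mp hc) i (Finset.mem_univ i)
          exact this
        exact (hG.dist_eq_zero_iff).mp hz
      subst hcc
      exact winIn_mono _ _ _ _ (by omega) (hA r)
    · set c1 : Fin k → α := fun i => if h : c i = c0 i then c i else
        (exists_chase hG h).choose with hc1
      have key0 : ∀ i, c i = c0 i → c1 i = c i := by
        intro i h; simp [hc1, h]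
      have key : ∀ i, c i ≠ c0 i →
          G.Adj (c i) (c1 i) ∧ G.dist (c1 i) (c0 i) < G.dist (c i) (c0 i) := by
        intro i h
        simp only [hc1, dif_neg h]
        exact ⟨(exists_chase hG h).choose_spec.1, (exists_chase hG h).choose_spec.2⟩
      have hmv : CopsMove G c c1 := by
        intro i; by_cases h : c i = c0 i
        · exact Or.inl (key0 i h)
        · exact Or.inr ((key i h).1)
      have hlt : (∑ i, G.dist (c1 i) (c0 i)) < d := by
        rw [← hc]
        apply Finset.sum_lt_sum
        · intro i _
          by_cases h : c i = c0 i
          · rw [key0 i h]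
          · exact le_of_lt (key i h).2
        · have hex : ∃ i, G.dist (c i) (c0 i) ≠ 0 := by
            by_contra hco
            push_neg at hco
            have hzz : (∑ i, G.dist (c i) (c0 i)) = 0 := Finset.sum_eq_zero fun i _ => hco i
            omega
          obtain ⟨i, hi⟩ := hex
          have h : c i ≠ c0 i := fun he => hi (by simp [he, SimpleGraph.dist_self])
          exact ⟨i, Finset.mem_univ i, (key i h).2⟩
      obtain ⟨d', rfl⟩ : ∃ d', d = d' + 1 := ⟨d-1, by omega⟩
      have hwin : WinIn G ((N + 1 + d') + 1) c r :=
        ⟨c1, hmv, Or.inr fun r' _ _ =>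
          winIn_mono _ _ _ _ (by omega) (ih _ (by omega) c1 rfl r')⟩
      exact winIn_mono _ _ _ _ (by omega) hwin

end SurroundProof

namespace SurroundProof

variable {α : Type*} {β : Type*}

/-- Status of a cop team: the team plays the game on `G` (its own coordinate)
while keeping its common matching coordinate (a vertex of `H`) close to the
robber's.  `u` are the team's own coordinates, `y` its common matching
coordinate, `a` the robber's own-coordinate shadow, `b` the robber's matching
coordinate.  The `ℕ` index is a rank used as a termination measure. -/
inductive St (G : SimpleGraph α) (H : SimpleGraph β) {k : ℕ}
    (u : Fin k → α) (y : β) (a : α) (b : β) : ℕ → Prop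
  | ready (n : ℕ) (hy : y = b) (hw : WinIn G n u a) : St G H u y a b (2*n)
  | mis (n : ℕ) (hy : H.Adj b y)
      (hr : ∀ a', RobberMove G a a' → (∀ i, u i ≠ a') → WinIn G n u a') :
      St G H u y a b (2*n+1)
  | fin (hs : Surrounded G u a) (hy : y = b ∨ H.Adj b y) : St G H u y a b 0

lemma St.unfold {G : SimpleGraph α} {H : SimpleGraph β} {k : ℕ}
    {u : Fin k → α} {y : β} {a : α} {b : β} {ρ : ℕ} (s : St G H u y a b ρ) :
    ∃ (u' : Fin k → α) (n' : ℕ),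
      (∀ i, (u' i, b) = (u i, y) ∨ (G.boxProd H).Adj (u i, y) (u' i, b)) ∧
      (Surrounded G u' a ∨ ∀ a', RobberMove G a a' → (∀ i, u' i ≠ a') → WinIn G n' u' a') ∧
      (2*n' + 1 ≤ ρ ∨ (ρ = 0 ∧ Surrounded G u' a)) := by
  cases s with
  | ready n hy hw =>
    subst hy
    cases n with
    | zero => exact hw.elim
    | succ m =>
      obtain ⟨u', hmv, hrest⟩ := hw
      refine ⟨u', m, fun i => ?_, hrest, Or.inl (by omega)⟩
      rcases hmv i with h | h
      · exact Or.inl (by rw [h])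
      · exact Or.inr (by rw [SimpleGraph.boxProd_adj]; exact Or.inl ⟨h, rfl⟩)
  | mis n hy hr =>
    refine ⟨u, n, fun i => Or.inr ?_, Or.inr hr, Or.inl (by omega)⟩
    rw [SimpleGraph.boxProd_adj]; exact Or.inr ⟨hy.symm, rfl⟩
  | fin hs hy =>
    refine ⟨u, 0, fun i => ?_, Or.inl hs, Or.inr ⟨rfl, hs⟩⟩
    rcases hy with rfl | h
    · exact Or.inl rfl
    · exact Or.inr (by rw [SimpleGraph.boxProd_adj]; exact Or.inr ⟨h.symm, rfl⟩)

/-- Combined positions of the two teams. -/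
def comb {k1 k2 : ℕ} (u : Fin k1 → α) (y : β) (x : α) (v : Fin k2 → β) :
    Fin (k1+k2) → α × β :=
  Fin.addCases (fun i => (u i, y)) (fun j => (x, v j))

lemma comb_free {k1 k2 : ℕ} {u : Fin k1 → α} {y : β} {x : α} {v : Fin k2 → β} {p : α × β}
    (h : ∀ i, comb u y x v i ≠ p) :
    (∀ i, (u i, y) ≠ p) ∧ (∀ j, (x, v j) ≠ p) := by
  constructor
  · intro i
    have := h (Fin.castAdd k2 i)
    simpa only [comb, Fin.addCases_left] using this
  · intro j
    have := h (Fin.natAdd k1 j)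
    simpa only [comb, Fin.addCases_right] using this

lemma comb_move {G : SimpleGraph α} {H : SimpleGraph β} {k1 k2 : ℕ}
    {u u' : Fin k1 → α} {y y' : β} {x x' : α} {v v' : Fin k2 → β}
    (h1 : ∀ i, (u' i, y') = (u i, y) ∨ (G.boxProd H).Adj (u i, y) (u' i, y'))
    (h2 : ∀ j, (x', v' j) = (x, v j) ∨ (G.boxProd H).Adj (x, v j) (x', v' j)) :
    CopsMove (G.boxProd H) (comb u y x v) (comb u' y' x' v') := by
  intro i
  refine Fin.addCases (motive := fun i => comb u' y' x' v' i = comb u y x v i ∨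
    (G.boxProd H).Adj (comb u y x v i) (comb u' y' x' v' i)) (fun i1 => ?_) (fun j => ?_) i
  · simpa only [comb, Fin.addCases_left] using h1 i1
  · simpa only [comb, Fin.addCases_right] using h2 j

lemma swap_move {G : SimpleGraph α} {H : SimpleGraph β} {x0 x1 : α} {v0 v1 : β}
    (h : (v1, x1) = (v0, x0) ∨ (H.boxProd G).Adj (v0, x0) (v1, x1)) :
    (x1, v1) = (x0, v0) ∨ (G.boxProd H).Adj (x0, v0) (x1, v1) := by
  rcases h with h | h
  · left
    rw [Prod.mk.injEq] at h ⊢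
    exact ⟨h.2, h.1⟩
  · right
    rw [SimpleGraph.boxProd_adj] at h ⊢
    tauto

lemma rm_cases {G : SimpleGraph α} {H : SimpleGraph β} {a a' : α} {b b' : β}
    (h : RobberMove (G.boxProd H) (a, b) (a', b')) :
    (a' = a ∧ b' = b) ∨ (G.Adj a a' ∧ b' = b) ∨ (a' = a ∧ H.Adj b b') := by
  rcases h with h | h
  · rw [Prod.mk.injEq] at h
    exact Or.inl h
  · rw [SimpleGraph.boxProd_adj] at h
    rcases h with ⟨h1, h2⟩ | ⟨h1, h2⟩
    · exact Or.inr (Or.inl ⟨h1, h2.symm⟩)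
    · exact Or.inr (Or.inr ⟨h2.symm, h1⟩)

section Post

variable {G : SimpleGraph α} {H : SimpleGraph β} {k : ℕ}
  {u' : Fin k → α} {n' ρ : ℕ} {a a' : α} {b b' : β}

/-- New team status when the robber stays put. -/
lemma post_pass
    (hpost : Surrounded G u' a ∨ ∀ a', RobberMove G a a' → (∀ i, u' i ≠ a') → WinIn G n' u' a')
    (hb : 2*n' + 1 ≤ ρ ∨ (ρ = 0 ∧ Surrounded G u' a))
    (hfr : ∀ i, u' i ≠ a) :
    ∃ ρ', ρ' ≤ ρ ∧ (ρ' < ρ ∨ Surrounded G u' a) ∧ St G H u' b a b ρ' := by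
  rcases hb with hle | ⟨hz, hsur⟩
  · rcases hpost with hsur | hr
    · exact ⟨0, by omega, Or.inr hsur, St.fin hsur (Or.inl rfl)⟩
    · exact ⟨2*n', by omega, Or.inl (by omega),
        St.ready n' rfl (hr a (Or.inl rfl) hfr)⟩
  · exact ⟨0, by omega, Or.inr hsur, St.fin hsur (Or.inl rfl)⟩

/-- New team status when the robber moves in the team's own coordinate. -/
lemma post_gmove
    (hpost : Surrounded G u' a ∨ ∀ a', RobberMove G a a' → (∀ i, u' i ≠ a') → WinIn G n' u' a')
    (hb : 2*n' + 1 ≤ ρ ∨ (ρ = 0 ∧ Surrounded G u' a))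
    (hadj : G.Adj a a') (hfr : ∀ i, u' i ≠ a') :
    ∃ ρ', ρ' < ρ ∧ St G H u' b a' b ρ' := by
  have hnsur : ¬ Surrounded G u' a := by
    intro hs
    obtain ⟨i, hi⟩ := hs a' hadj
    exact hfr i hi
  rcases hb with hle | ⟨hz, hsur⟩
  · rcases hpost with hsur | hr
    · exact absurd hsur hnsur
    · exact ⟨2*n', by omega, St.ready n' rfl (hr a' (Or.inr hadj) hfr)⟩
  · exact absurd hsur hnsur

/-- New team status when the robber moves in the matching coordinate. -/
lemma post_shift
    (hpost : Surrounded G u' a ∨ ∀ a', RobberMove G a a' → (∀ i, u' i ≠ a') → WinIn G n' u' a')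
    (hb : 2*n' + 1 ≤ ρ ∨ (ρ = 0 ∧ Surrounded G u' a))
    (hadj : H.Adj b b') :
    ∃ ρ', ρ' ≤ ρ ∧ St G H u' b a b' ρ' := by
  rcases hb with hle | ⟨hz, hsur⟩
  · rcases hpost with hsur | hr
    · exact ⟨0, by omega, St.fin hsur (Or.inr hadj.symm)⟩
    · exact ⟨2*n' + 1, hle, St.mis n' hadj.symm hr⟩
  · exact ⟨0, by omega, St.fin hsur (Or.inr hadj.symm)⟩

end Post


section Master

variable {G : SimpleGraph α} {H : SimpleGraph β} [Fintype α] [Fintype β]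

lemma masterA0 : ∀ (ρ : ℕ) (k1 k2 ρ1 ρ2 : ℕ) (u : Fin k1 → α) (y : β) (a : α) (b : β)
    (x : α) (v : Fin k2 → β), ρ1 + ρ2 ≤ ρ → St G H u y a b ρ1 → St H G v x b a ρ2 →
    CopsWin (G.boxProd H) (comb u y x v) (a, b) := by
  intro ρ
  induction ρ using Nat.strong_induction_on with
  | _ ρ IH =>
  intro k1 k2 ρ1 ρ2 u y a b x v hρ s1 s2
  obtain ⟨u', n1, hmv1, hpost1, hb1⟩ := s1.unfold
  obtain ⟨v', n2, hmv2, hpost2, hb2⟩ := s2.unfold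
  have hmove : CopsMove (G.boxProd H) (comb u y x v) (comb u' b a v') :=
    comb_move hmv1 (fun j => swap_move (hmv2 j))
  by_cases hemit : Surrounded G u' a ∧ Surrounded H v' b
  · refine CopsWin.surround _ _ (comb u' b a v') hmove ?_
    rintro ⟨a', b'⟩ hw
    rw [SimpleGraph.boxProd_adj] at hw
    rcases hw with ⟨h, heq⟩ | ⟨h, heq⟩ <;> dsimp only at h heq
    · subst heq
      obtain ⟨i, hi⟩ := hemit.1 a' h
      exact ⟨Fin.castAdd k2 i, by simp only [comb, Fin.addCases_left, hi]⟩
    · subst heq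
      obtain ⟨j, hj⟩ := hemit.2 b' h
      exact ⟨Fin.natAdd k1 j, by simp only [comb, Fin.addCases_right, hj]⟩
  · refine CopsWin.step _ _ (comb u' b a v') hmove ?_
    rintro ⟨a', b'⟩ hrm hfree
    obtain ⟨hf1, hf2⟩ := comb_free hfree
    rcases rm_cases hrm with ⟨rfl, rfl⟩ | ⟨hadj, rfl⟩ | ⟨rfl, hadj⟩
    · -- robber passes: both teams consume a response
      obtain ⟨ρ1', hle1, hstr1, s1'⟩ :=
        post_pass (H := H) hpost1 hb1 (fun i h => hf1 i (by rw [h]))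
      obtain ⟨ρ2', hle2, hstr2, s2'⟩ :=
        post_pass (H := G) hpost2 hb2 (fun j h => hf2 j (by rw [h]))
      have hstrict : ρ1' + ρ2' < ρ1 + ρ2 := by
        rcases hstr1 with h1 | h1
        · omega
        · rcases hstr2 with h2 | h2
          · omega
          · exact absurd ⟨h1, h2⟩ hemit
      exact IH (ρ1' + ρ2') (by omega) _ _ _ _ _ _ _ _ _ _ (le_refl _) s1' s2'
    · -- robber moves in the G coordinate
      obtain ⟨ρ1', hlt1, s1'⟩ :=
        post_gmove (H := H) hpost1 hb1 hadj (fun i h => hf1 i (by rw [h]))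
      obtain ⟨ρ2', hle2, s2'⟩ := post_shift (H := G) hpost2 hb2 hadj
      exact IH (ρ1' + ρ2') (by omega) _ _ _ _ _ _ _ _ _ _ (le_refl _) s1' s2'
    · -- robber moves in the H coordinate
      obtain ⟨ρ1', hle1, s1'⟩ := post_shift (H := H) hpost1 hb1 hadj
      obtain ⟨ρ2', hlt2, s2'⟩ :=
        post_gmove (H := G) hpost2 hb2 hadj (fun j h => hf2 j (by rw [h]))
      exact IH (ρ1' + ρ2') (by omega) _ _ _ _ _ _ _ _ _ _ (le_refl _) s1' s2'

end Master


section Chase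

variable {G : SimpleGraph α} {H : SimpleGraph β} [Fintype α] [Fintype β]

/-- Team 1 (the `G`-team) is active, team 2 is still chasing the robber's
`G`-coordinate. -/
lemma masterA1 (hG : G.Connected) (hH : H.Connected) {k1 k2 : ℕ}
    (hk2 : CopsWinWith H k2) :
    ∀ (ρ1 d2 : ℕ) (u : Fin k1 → α) (y : β) (a : α) (b : β) (x : α) (v : Fin k2 → β),
      St G H u y a b ρ1 → G.dist x a = d2 → CopsWin (G.boxProd H) (comb u y x v) (a, b) := by
  intro ρ1
  induction ρ1 using Nat.strong_induction_on with
  | _ ρ1 IH1 =>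
  intro d2
  induction d2 using Nat.strong_induction_on with
  | _ d2 IH2 =>
  intro u y a b x v s1 hd
  by_cases hxa : x = a
  · obtain ⟨m, hm⟩ := exists_winIn_of_copsWinWith hH hk2 v b
    exact masterA0 (ρ1 + 2*m) k1 k2 ρ1 (2*m) u y a b x v (le_refl _) s1
      (St.ready m hxa hm)
  · obtain ⟨x1, hadjx, hltx⟩ := exists_chase hG hxa
    obtain ⟨u', n1, hmv1, hpost1, hb1⟩ := s1.unfold
    have hmove : CopsMove (G.boxProd H) (comb u y x v) (comb u' b x1 v) :=
      comb_move hmv1 (fun j => Or.inr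
        (by rw [SimpleGraph.boxProd_adj]; exact Or.inl ⟨hadjx, rfl⟩))
    refine CopsWin.step _ _ _ hmove ?_
    rintro ⟨a', b'⟩ hrm hfree
    obtain ⟨hf1, hf2⟩ := comb_free hfree
    rcases rm_cases hrm with ⟨rfl, rfl⟩ | ⟨hadj, rfl⟩ | ⟨rfl, hadj⟩
    · -- pass
      obtain ⟨ρ1', hle, hstr, s1'⟩ :=
        post_pass (H := H) hpost1 hb1 (fun i h => hf1 i (by rw [h]))
      rcases Nat.lt_or_ge ρ1' ρ1 with hcase | hcase
      · exact IH1 ρ1' hcase _ _ _ _ _ x1 v s1' rfl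
      · have heq : ρ1' = ρ1 := le_antisymm hle hcase
        subst heq
        refine IH2 _ ?_ _ _ _ _ x1 v s1' rfl
        omega
    · -- robber G-move: team 1 rank strictly decreases
      obtain ⟨ρ1', hlt, s1'⟩ :=
        post_gmove (H := H) hpost1 hb1 hadj (fun i h => hf1 i (by rw [h]))
      exact IH1 ρ1' hlt _ _ _ _ _ x1 v s1' rfl
    · -- robber H-move: chase distance decreases (robber's G-coordinate fixed)
      obtain ⟨ρ1', hle, s1'⟩ := post_shift (H := H) hpost1 hb1 hadj
      rcases Nat.lt_or_ge ρ1' ρ1 with hcase | hcase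
      · exact IH1 ρ1' hcase _ _ _ _ _ x1 v s1' rfl
      · have heq : ρ1' = ρ1 := le_antisymm hle hcase
        subst heq
        refine IH2 _ ?_ _ _ _ _ x1 v s1' rfl
        omega

/-- Team 2 (the `H`-team) is active, team 1 is still chasing the robber's
`H`-coordinate. -/
lemma masterA1' (hG : G.Connected) (hH : H.Connected) {k1 k2 : ℕ}
    (hk1 : CopsWinWith G k1) :
    ∀ (ρ2 d1 : ℕ) (u : Fin k1 → α) (y : β) (a : α) (b : β) (x : α) (v : Fin k2 → β),
      St H G v x b a ρ2 → H.dist y b = d1 → CopsWin (G.boxProd H) (comb u y x v) (a, b) := by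
  intro ρ2
  induction ρ2 using Nat.strong_induction_on with
  | _ ρ2 IH1 =>
  intro d1
  induction d1 using Nat.strong_induction_on with
  | _ d1 IH2 =>
  intro u y a b x v s2 hd
  by_cases hyb : y = b
  · obtain ⟨n, hn⟩ := exists_winIn_of_copsWinWith hG hk1 u a
    exact masterA0 (2*n + ρ2) k1 k2 (2*n) ρ2 u y a b x v (le_refl _)
      (St.ready n hyb hn) s2
  · obtain ⟨y1, hadjy, hlty⟩ := exists_chase hH hyb
    obtain ⟨v', n2, hmv2, hpost2, hb2⟩ := s2.unfold
    have hmove : CopsMove (G.boxProd H) (comb u y x v) (comb u y1 a v') :=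
      comb_move (fun i => Or.inr
        (by rw [SimpleGraph.boxProd_adj]; exact Or.inr ⟨hadjy, rfl⟩))
        (fun j => swap_move (hmv2 j))
    refine CopsWin.step _ _ _ hmove ?_
    rintro ⟨a', b'⟩ hrm hfree
    obtain ⟨hf1, hf2⟩ := comb_free hfree
    rcases rm_cases hrm with ⟨rfl, rfl⟩ | ⟨hadj, rfl⟩ | ⟨rfl, hadj⟩
    · -- pass
      obtain ⟨ρ2', hle, hstr, s2'⟩ :=
        post_pass (H := G) hpost2 hb2 (fun j h => hf2 j (by rw [h]))
      rcases Nat.lt_or_ge ρ2' ρ2 with hcase | hcase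
      · exact IH1 ρ2' hcase _ _ y1 _ _ _ v' s2' rfl
      · have heq : ρ2' = ρ2 := le_antisymm hle hcase
        subst heq
        refine IH2 _ ?_ _ y1 _ _ _ v' s2' rfl
        omega
    · -- robber G-move: team 2 shifts, chase distance decreases
      obtain ⟨ρ2', hle, s2'⟩ := post_shift (H := G) hpost2 hb2 hadj
      rcases Nat.lt_or_ge ρ2' ρ2 with hcase | hcase
      · exact IH1 ρ2' hcase _ _ y1 _ _ _ v' s2' rfl
      · have heq : ρ2' = ρ2 := le_antisymm hle hcase
        subst heq
        refine IH2 _ ?_ _ y1 _ _ _ v' s2' rfl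
        omega
    · -- robber H-move: team 2 rank strictly decreases
      obtain ⟨ρ2', hlt, s2'⟩ :=
        post_gmove (H := G) hpost2 hb2 hadj (fun j h => hf2 j (by rw [h]))
      exact IH1 ρ2' hlt _ _ y1 _ _ _ v' s2' rfl

/-- Both teams chasing. -/
lemma masterA2 (hG : G.Connected) (hH : H.Connected) {k1 k2 : ℕ}
    (hk1 : CopsWinWith G k1) (hk2 : CopsWinWith H k2) :
    ∀ (D : ℕ) (u : Fin k1 → α) (y : β) (a : α) (b : β) (x : α) (v : Fin k2 → β),
      H.dist y b + G.dist x a = D → CopsWin (G.boxProd H) (comb u y x v) (a, b) := by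
  intro D
  induction D using Nat.strong_induction_on with
  | _ D IH =>
  intro u y a b x v hD
  by_cases hyb : y = b
  · obtain ⟨n, hn⟩ := exists_winIn_of_copsWinWith hG hk1 u a
    exact masterA1 hG hH hk2 (2*n) (G.dist x a) u y a b x v (St.ready n hyb hn) rfl
  by_cases hxa : x = a
  · obtain ⟨m, hm⟩ := exists_winIn_of_copsWinWith hH hk2 v b
    exact masterA1' hG hH hk1 (2*m) (H.dist y b) u y a b x v (St.ready m hxa hm) rfl
  obtain ⟨y1, hadjy, hlty⟩ := exists_chase hH hyb
  obtain ⟨x1, hadjx, hltx⟩ := exists_chase hG hxa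
  have hmove : CopsMove (G.boxProd H) (comb u y x v) (comb u y1 x1 v) :=
    comb_move (fun i => Or.inr
      (by rw [SimpleGraph.boxProd_adj]; exact Or.inr ⟨hadjy, rfl⟩))
      (fun j => Or.inr
      (by rw [SimpleGraph.boxProd_adj]; exact Or.inl ⟨hadjx, rfl⟩))
  refine CopsWin.step _ _ _ hmove ?_
  rintro ⟨a', b'⟩ hrm hfree
  rcases rm_cases hrm with ⟨rfl, rfl⟩ | ⟨hadj, rfl⟩ | ⟨rfl, hadj⟩
  · refine IH _ ?_ u y1 _ _ x1 v rfl
    omega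
  · have h2 : G.dist a a' ≤ 1 := by
      have := SimpleGraph.dist_le (SimpleGraph.Walk.cons hadj SimpleGraph.Walk.nil)
      simpa using this
    have htri : G.dist x1 a' ≤ G.dist x1 a + G.dist a a' := hG.dist_triangle
    refine IH _ ?_ u y1 _ _ x1 v rfl
    omega
  · have h2 : H.dist b b' ≤ 1 := by
      have := SimpleGraph.dist_le (SimpleGraph.Walk.cons hadj SimpleGraph.Walk.nil)
      simpa using this
    have htri : H.dist y1 b' ≤ H.dist y1 b + H.dist b b' := hH.dist_triangle
    refine IH _ ?_ u y1 _ _ x1 v rfl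
    omega

end Chase


lemma copsWinWith_card (G : SimpleGraph α) [Fintype α] :
    CopsWinWith G (Fintype.card α) :=
  ⟨fun i => (Fintype.equivFin α).symm i, fun r hr =>
    absurd ((Fintype.equivFin α).symm_apply_apply r) (hr _)⟩

end SurroundProof


/-- For connected graphs, `σ(G □ H) ≤ σ(G) + σ(H)` (Cartesian product). -/
theorem surroundNumber_boxProd {α β : Type*} [Fintype α] [Fintype β]
    (G : SimpleGraph α) (H : SimpleGraph β)
    (hG : G.Connected) (hH : H.Connected) :
    surroundNumber (G.boxProd H) ≤ surroundNumber G + surroundNumber H := by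
  classical
  have h1 : CopsWinWith G (surroundNumber G) :=
    Nat.sInf_mem (s := {k | CopsWinWith G k}) ⟨_, SurroundProof.copsWinWith_card G⟩
  have h2 : CopsWinWith H (surroundNumber H) :=
    Nat.sInf_mem (s := {k | CopsWinWith H k}) ⟨_, SurroundProof.copsWinWith_card H⟩
  apply Nat.sInf_le
  obtain ⟨g0⟩ := hG.nonempty
  obtain ⟨h0⟩ := hH.nonempty
  show CopsWinWith (G.boxProd H) (surroundNumber G + surroundNumber H)
  refine ⟨SurroundProof.comb (fun _ => g0) h0 g0 (fun _ => h0), fun r _ => ?_⟩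
  obtain ⟨a, b⟩ := r
  exact SurroundProof.masterA2 hG hH h1 h2 _ _ h0 a b g0 _ rfl
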